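/- Let X be a nonnegative random variable with finite moments of all orders and Y such that conditionally on X, Y ~ Poisson(ρX). Then for every s ≥ 0, E[(Y − ρX)^s] = Σ_{k=0}^{s} ρ^k E[X^k] S_2(s,k), where S_2(s,k) counts partitions of an s-set into k blocks of size at least 2. -/

import Mathlib

open MeasureTheory ProbabilityTheory Filter Real Finset
open scoped ENNReal NNReal

/-- `Y` is, conditionally on `X`, Poisson distributed with rate `ρ * X`. -/
def CondPoisson {Ω : Type*} [MeasurableSpace Ω] (μ : Measure Ω)
    (X : Ω → ℝ) (Y : Ω → ℕ) (ρ : ℝ) : Prop :=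
  ∀ (ℓ : ℕ) (A : Set ℝ), MeasurableSet A →
    μ {ω | X ω ∈ A ∧ Y ω = ℓ}
      = ∫⁻ ω in {ω | X ω ∈ A},
          ENNReal.ofReal ((ρ * X ω) ^ ℓ * Real.exp (-(ρ * X ω)) / ℓ.factorial) ∂μ

/-- Associated Stirling numbers of the second kind: the number of partitions of
an `s`-element set into exactly `k` blocks, each of size at least `2`. -/
noncomputable def assocStirling (s k : ℕ) : ℕ :=
  Nat.card {P : Finset (Finset (Fin s)) //
    P.card = k ∧ (∀ B ∈ P, 2 ≤ B.card) ∧ ∀ x : Fin s, ∃! B, B ∈ P ∧ x ∈ B}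

open scoped Classical in
noncomputable def parts {α : Type*} [DecidableEq α] (A : Finset α) (k : ℕ) :
    Finset (Finset (Finset α)) :=
  A.powerset.powerset.filter
    (fun P => P.card = k ∧ (∀ B ∈ P, 2 ≤ B.card) ∧ ∀ x ∈ A, ∃! B, B ∈ P ∧ x ∈ B)

lemma mem_parts {α : Type*} [DecidableEq α] {A : Finset α} {k : ℕ}
    {P : Finset (Finset α)} :
    P ∈ parts A k ↔ (∀ B ∈ P, B ⊆ A) ∧ P.card = k ∧ (∀ B ∈ P, 2 ≤ B.card) ∧
      ∀ x ∈ A, ∃! B, B ∈ P ∧ x ∈ B := by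
  classical
  simp only [parts, Finset.mem_filter, Finset.mem_powerset]
  constructor
  · rintro ⟨h1, h2⟩
    exact ⟨fun B hB => Finset.mem_powerset.1 (h1 hB), h2⟩
  · rintro ⟨h1, h2⟩
    exact ⟨fun B hB => Finset.mem_powerset.2 (h1 B hB), h2⟩

lemma card_parts_univ (s k : ℕ) :
    (parts (univ : Finset (Fin s)) k).card = assocStirling s k := by
  classical
  rw [assocStirling, Nat.card_eq_fintype_card, Fintype.card_subtype]
  congr 1
  ext P
  simp only [mem_parts, Finset.mem_filter, Finset.mem_univ, true_and]
  constructor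
  · rintro ⟨-, h2, h3, h4⟩
    exact ⟨h2, h3, fun x => h4 x trivial⟩
  · rintro ⟨h2, h3, h4⟩
    exact ⟨fun B _ => Finset.subset_univ B, h2, h3, fun x _ => h4 x⟩

lemma parts_disjoint {α : Type*} [DecidableEq α] {A : Finset α} {k : ℕ}
    {P : Finset (Finset α)} (hP : P ∈ parts A k) {B₁ B₂ : Finset α}
    (h1 : B₁ ∈ P) (h2 : B₂ ∈ P) (hne : B₁ ≠ B₂) : Disjoint B₁ B₂ := by
  rw [mem_parts] at hP
  rw [Finset.disjoint_left]
  intro x hx1 hx2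
  obtain ⟨B, -, hBu⟩ := hP.2.2.2 x (hP.1 B₁ h1 hx1)
  exact hne ((hBu B₁ ⟨h1, hx1⟩).trans (hBu B₂ ⟨h2, hx2⟩).symm)

lemma parts_biUnion {α : Type*} [DecidableEq α] {A : Finset α} {k : ℕ}
    {P : Finset (Finset α)} (hP : P ∈ parts A k) : P.biUnion id = A := by
  rw [mem_parts] at hP
  ext x
  simp only [Finset.mem_biUnion, id]
  constructor
  · rintro ⟨B, hB, hx⟩; exact hP.1 B hB hx
  · intro hx
    obtain ⟨B, hB, -⟩ := hP.2.2.2 x hx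
    exact ⟨B, hB.1, hB.2⟩

lemma parts_card_le {α : Type*} [DecidableEq α] {A : Finset α} {k : ℕ}
    {P : Finset (Finset α)} (hP : P ∈ parts A k) : 2 * k ≤ A.card := by
  classical
  have hdisj : ∀ B₁ ∈ P, ∀ B₂ ∈ P, B₁ ≠ B₂ → Disjoint (id B₁) (id B₂) :=
    fun B₁ h1 B₂ h2 hne => parts_disjoint hP h1 h2 hne
  have hcard : A.card = ∑ B ∈ P, B.card := by
    rw [← parts_biUnion hP, Finset.card_biUnion hdisj]; rfl
  have hk := (mem_parts.1 hP).2.1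
  have h2 := (mem_parts.1 hP).2.2.1
  calc 2 * k = ∑ _B ∈ P, 2 := by rw [Finset.sum_const, hk, smul_eq_mul, mul_comm]
  _ ≤ ∑ B ∈ P, B.card := Finset.sum_le_sum h2
  _ = A.card := hcard.symm

lemma parts_empty_of_pos {α : Type*} [DecidableEq α] {A : Finset α} {k : ℕ}
    (hA : A.card < 2 * k) : parts A k = ∅ := by
  rw [Finset.eq_empty_iff_forall_notMem]
  exact fun P hP => absurd (parts_card_le hP) (by omega)

lemma parts_zero_of_nonempty {α : Type*} [DecidableEq α] {A : Finset α}
    (hA : A.Nonempty) : parts A 0 = ∅ := by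
  rw [Finset.eq_empty_iff_forall_notMem]
  intro P hP
  rw [mem_parts] at hP
  obtain ⟨x, hx⟩ := hA
  obtain ⟨B, hB, -⟩ := hP.2.2.2 x hx
  have h0 := Finset.card_eq_zero.1 hP.2.1
  rw [h0] at hB
  exact absurd hB.1 (Finset.notMem_empty B)

lemma parts_empty_zero {α : Type*} [DecidableEq α] :
    parts (∅ : Finset α) 0 = {∅} := by
  ext P
  rw [mem_parts]
  simp only [Finset.mem_singleton]
  constructor
  · rintro ⟨-, h2, -, -⟩
    exact Finset.card_eq_zero.1 h2
  · rintro rfl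
    refine ⟨by simp, by simp, by simp, by simp⟩

lemma card_parts_image {α β : Type*} [DecidableEq α] [DecidableEq β]
    {f : α → β} (hf : Function.Injective f) (A : Finset α) (k : ℕ) :
    (parts (A.image f) k).card = (parts A k).card := by
  classical
  have himg : ∀ B : Finset α, (B.image f).card = B.card :=
    fun B => Finset.card_image_of_injective B hf
  have hginj : Function.Injective (fun B : Finset α => B.image f) :=
    Finset.image_injective hf
  refine (Finset.card_bij (fun P _ => P.image (fun B => B.image f)) ?_ ?_ ?_).symm
  · -- maps to
    intro P hP
    rw [mem_parts] at hP ⊢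
    obtain ⟨hsub, hcard, hsize, hcov⟩ := hP
    refine ⟨?_, ?_, ?_, ?_⟩
    · intro B hB
      simp only [Finset.mem_image] at hB
      obtain ⟨B₀, hB₀, rfl⟩ := hB
      exact Finset.image_subset_image (hsub B₀ hB₀)
    · rw [Finset.card_image_of_injective P hginj, hcard]
    · intro B hB
      simp only [Finset.mem_image] at hB
      obtain ⟨B₀, hB₀, rfl⟩ := hB
      rw [himg]; exact hsize B₀ hB₀
    · intro y hy
      simp only [Finset.mem_image] at hy
      obtain ⟨x, hx, rfl⟩ := hy
      obtain ⟨B, ⟨hBP, hxB⟩, hBu⟩ := hcov x hx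
      refine ⟨B.image f, ⟨Finset.mem_image_of_mem _ hBP, Finset.mem_image_of_mem f hxB⟩, ?_⟩
      rintro C ⟨hCP, hfxC⟩
      simp only [Finset.mem_image] at hCP
      obtain ⟨C₀, hC₀, rfl⟩ := hCP
      have hxC₀ : x ∈ C₀ := by
        simp only [Finset.mem_image] at hfxC
        obtain ⟨x', hx', hfx⟩ := hfxC
        rwa [← hf hfx]
      rw [hBu C₀ ⟨hC₀, hxC₀⟩]
  · -- injective
    intro P₁ h₁ P₂ h₂ h
    exact Finset.image_injective hginj h
  · -- surjective
    intro Q hQ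
    rw [mem_parts] at hQ
    obtain ⟨hsub, hcard, hsize, hcov⟩ := hQ
    have hrange : ∀ C ∈ Q, ∀ y ∈ C, y ∈ Set.range f := by
      intro C hC y hy
      obtain ⟨x, -, rfl⟩ := Finset.mem_image.1 (hsub C hC hy)
      exact ⟨x, rfl⟩
    have hCim : ∀ C ∈ Q, (C.preimage f hf.injOn).image f = C := by
      intro C hC
      rw [Finset.image_preimage]
      exact Finset.filter_true_of_mem (hrange C hC)
    refine ⟨Q.image (fun C => C.preimage f hf.injOn), ?_, ?_⟩
    · rw [mem_parts]
      have hpreinj : Set.InjOn (fun C : Finset β => C.preimage f hf.injOn) Q := by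
        intro C₁ h₁ C₂ h₂ h
        have h' := congrArg (Finset.image f) h
        rwa [hCim C₁ h₁, hCim C₂ h₂] at h'
      refine ⟨?_, ?_, ?_, ?_⟩
      · intro B hB
        simp only [Finset.mem_image] at hB
        obtain ⟨C, hC, rfl⟩ := hB
        intro x hx
        rw [Finset.mem_preimage] at hx
        obtain ⟨a, ha, hax⟩ := Finset.mem_image.1 (hsub C hC hx)
        rwa [← hf hax]
      · rw [Finset.card_image_of_injOn hpreinj, hcard]
      · intro B hB
        simp only [Finset.mem_image] at hB
        obtain ⟨C, hC, rfl⟩ := hB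
        have : ((C.preimage f hf.injOn).image f).card = C.card := by rw [hCim C hC]
        rw [himg] at this
        rw [this]; exact hsize C hC
      · intro x hx
        obtain ⟨C, ⟨hCQ, hfxC⟩, hCu⟩ := hcov (f x) (Finset.mem_image_of_mem f hx)
        refine ⟨C.preimage f hf.injOn, ⟨Finset.mem_image_of_mem _ hCQ,
          Finset.mem_preimage.2 hfxC⟩, ?_⟩
        rintro B ⟨hBP, hxB⟩
        simp only [Finset.mem_image] at hBP
        obtain ⟨C₀, hC₀, rfl⟩ := hBP
        rw [hCu C₀ ⟨hC₀, Finset.mem_preimage.1 hxB⟩]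
    · show Finset.image (fun B => B.image f) (Q.image (fun C => C.preimage f hf.injOn)) = Q
      rw [Finset.image_image]
      have : ∀ C ∈ Q, ((fun B : Finset α => B.image f) ∘
          fun C : Finset β => C.preimage f hf.injOn) C = id C := fun C hC => hCim C hC
      rw [Finset.image_congr this, Finset.image_id]

lemma card_parts_eq_assocStirling {α : Type*} [DecidableEq α] (A : Finset α) (k : ℕ) :
    (parts A k).card = assocStirling A.card k := by
  classical
  let e : Fin A.card ≃ {x // x ∈ A} := A.equivFin.symm
  let f : Fin A.card → α := fun i => (e i : α)
  have hf : Function.Injective f :=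
    fun i j h => e.injective (Subtype.ext h)
  have himg : (Finset.univ : Finset (Fin A.card)).image f = A := by
    ext x
    simp only [Finset.mem_image, Finset.mem_univ, true_and]
    constructor
    · rintro ⟨i, rfl⟩; exact (e i).2
    · intro hx; exact ⟨e.symm ⟨x, hx⟩, by simp [f]⟩
  rw [← card_parts_univ A.card k, ← card_parts_image hf Finset.univ k, himg]

lemma insert_mem_parts {α : Type*} [DecidableEq α] {a : α} {A : Finset α}
    (ha : a ∉ A) {B' : Finset α} (hB' : B' ⊆ A) (hne : B'.Nonempty) {k : ℕ}
    {Q : Finset (Finset α)} (hQ : Q ∈ parts (A \ B') k) :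
    insert (insert a B') Q ∈ parts (insert a A) (k + 1) := by
  classical
  rw [mem_parts] at hQ ⊢
  obtain ⟨hsub, hcard, hsize, hcov⟩ := hQ
  have haB' : a ∉ B' := fun h => ha (hB' h)
  have hXnotQ : insert a B' ∉ Q := by
    intro h
    have := hsub _ h (Finset.mem_insert_self a B')
    exact ha (Finset.mem_sdiff.1 this).1
  have hQa : ∀ C ∈ Q, a ∉ C := by
    intro C hC hac
    exact ha (Finset.mem_sdiff.1 (hsub C hC hac)).1
  have hQB' : ∀ C ∈ Q, ∀ x ∈ B', x ∉ C := by
    intro C hC x hx hxC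
    exact (Finset.mem_sdiff.1 (hsub C hC hxC)).2 hx
  refine ⟨?_, ?_, ?_, ?_⟩
  · intro B hB
    rcases Finset.mem_insert.1 hB with rfl | hB
    · exact Finset.insert_subset_insert a hB'
    · exact (hsub B hB).trans ((Finset.sdiff_subset).trans (Finset.subset_insert a A))
  · rw [Finset.card_insert_of_notMem hXnotQ, hcard]
  · intro B hB
    rcases Finset.mem_insert.1 hB with rfl | hB
    · rw [Finset.card_insert_of_notMem haB']
      exact Nat.succ_le_succ (Finset.card_pos.2 hne)
    · exact hsize B hB
  · intro x hx
    rcases Finset.mem_insert.1 hx with rfl | hx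
    · refine ⟨insert x B', ⟨Finset.mem_insert_self _ _, Finset.mem_insert_self _ _⟩, ?_⟩
      rintro B ⟨hB, hxB⟩
      rcases Finset.mem_insert.1 hB with rfl | hB
      · rfl
      · exact absurd hxB (hQa B hB)
    · by_cases hxB' : x ∈ B'
      · refine ⟨insert a B', ⟨Finset.mem_insert_self _ _, Finset.mem_insert_of_mem hxB'⟩, ?_⟩
        rintro B ⟨hB, hxB⟩
        rcases Finset.mem_insert.1 hB with rfl | hB
        · rfl
        · exact absurd hxB (hQB' B hB x hxB')
      · obtain ⟨C, ⟨hCQ, hxC⟩, hCu⟩ := hcov x (Finset.mem_sdiff.2 ⟨hx, hxB'⟩)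
        refine ⟨C, ⟨Finset.mem_insert_of_mem hCQ, hxC⟩, ?_⟩
        rintro B ⟨hB, hxB⟩
        rcases Finset.mem_insert.1 hB with rfl | hB
        · rcases Finset.mem_insert.1 hxB with h | hxB
          · exact absurd (h ▸ hx) ha
          · exact absurd hxB hxB'
        · exact hCu B ⟨hB, hxB⟩

lemma card_parts_insert {α : Type*} [DecidableEq α] {a : α} {A : Finset α}
    (ha : a ∉ A) (k : ℕ) :
    (parts (insert a A) (k + 1)).card
      = ∑ B' ∈ A.powerset.filter (fun B => B.Nonempty), (parts (A \ B') k).card := by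
  classical
  have hdecomp : parts (insert a A) (k + 1)
      = (A.powerset.filter (fun B => B.Nonempty)).biUnion
          (fun B' => (parts (A \ B') k).image (fun Q => insert (insert a B') Q)) := by
    ext P
    simp only [Finset.mem_biUnion, Finset.mem_filter, Finset.mem_powerset, Finset.mem_image]
    constructor
    · intro hP
      have hPm := mem_parts.1 hP
      obtain ⟨hsub, hcard, hsize, hcov⟩ := hPm
      obtain ⟨B, ⟨hBP, haB⟩, hBu⟩ := hcov a (Finset.mem_insert_self a A)
      set B' := B.erase a with hB'def
      have hB'A : B' ⊆ A := by
        intro x hx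
        have hxB := Finset.mem_of_mem_erase hx
        have hxa := Finset.ne_of_mem_erase hx
        rcases Finset.mem_insert.1 (hsub B hBP hxB) with rfl | h
        · exact absurd rfl hxa
        · exact h
      have hB'ne : B'.Nonempty := by
        rw [← Finset.card_pos, Finset.card_erase_of_mem haB]
        have := hsize B hBP
        omega
      have haB' : a ∉ B' := Finset.notMem_erase a B
      have hBins : insert a B' = B := Finset.insert_erase haB
      refine ⟨B', ⟨hB'A, hB'ne⟩, P.erase B, ?_, ?_⟩
      · rw [mem_parts]
        have hQa : ∀ C ∈ P.erase B, a ∉ C := by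
          intro C hC hac
          exact (Finset.ne_of_mem_erase hC) (hBu C ⟨Finset.mem_of_mem_erase hC, hac⟩)
        refine ⟨?_, ?_, ?_, ?_⟩
        · intro C hC x hxC
          have hCP := Finset.mem_of_mem_erase hC
          rw [Finset.mem_sdiff]
          have hxa : x ≠ a := fun h => hQa C hC (h ▸ hxC)
          constructor
          · rcases Finset.mem_insert.1 (hsub C hCP hxC) with rfl | h
            · exact absurd rfl hxa
            · exact h
          · intro hxB'
            have hxB : x ∈ B := Finset.mem_of_mem_erase hxB'
            obtain ⟨D, -, hDu⟩ := hcov x (hsub C hCP hxC)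
            have h1 := hDu C ⟨hCP, hxC⟩
            have h2 := hDu B ⟨hBP, hxB⟩
            exact (Finset.ne_of_mem_erase hC) (h1.trans h2.symm)
        · rw [Finset.card_erase_of_mem hBP, hcard]; omega
        · intro C hC; exact hsize C (Finset.mem_of_mem_erase hC)
        · intro x hx
          rw [Finset.mem_sdiff] at hx
          obtain ⟨C, ⟨hCP, hxC⟩, hCu⟩ := hcov x (Finset.mem_insert_of_mem hx.1)
          have hCB : C ≠ B := by
            intro h; subst h
            have hxa : x ≠ a := fun h => ha (h ▸ hx.1)
            exact hx.2 (Finset.mem_erase.2 ⟨hxa, hxC⟩)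
          refine ⟨C, ⟨Finset.mem_erase.2 ⟨hCB, hCP⟩, hxC⟩, ?_⟩
          rintro D ⟨hD, hxD⟩
          exact hCu D ⟨Finset.mem_of_mem_erase hD, hxD⟩
      · rw [hBins, Finset.insert_erase hBP]
    · rintro ⟨B', ⟨hB'A, hB'ne⟩, Q, hQ, rfl⟩
      exact insert_mem_parts ha hB'A hB'ne hQ
  rw [hdecomp, Finset.card_biUnion, ]
  · refine Finset.sum_congr rfl ?_
    intro B' hB'
    rw [Finset.mem_filter, Finset.mem_powerset] at hB'
    apply Finset.card_image_of_injOn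
    intro Q₁ h₁ Q₂ h₂ h
    have hX1 : insert a B' ∉ Q₁ := by
      intro hmem
      have := (mem_parts.1 h₁).1 _ hmem (Finset.mem_insert_self a B')
      exact ha (Finset.mem_sdiff.1 this).1
    have hX2 : insert a B' ∉ Q₂ := by
      intro hmem
      have := (mem_parts.1 h₂).1 _ hmem (Finset.mem_insert_self a B')
      exact ha (Finset.mem_sdiff.1 this).1
    have := congrArg (Finset.erase · (insert a B')) h
    simpa [Finset.erase_insert hX1, Finset.erase_insert hX2] using this
  · intro B₁ h₁ B₂ h₂ hne
    rw [Finset.mem_coe, Finset.mem_filter, Finset.mem_powerset] at h₁ h₂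
    rw [Function.onFun, Finset.disjoint_left]
    rintro P hP1 hP2
    simp only [Finset.mem_image] at hP1 hP2
    obtain ⟨Q₁, hQ₁, rfl⟩ := hP1
    obtain ⟨Q₂, hQ₂, hPeq⟩ := hP2
    have hPmem := insert_mem_parts ha h₁.1 h₁.2 hQ₁
    have hcov := (mem_parts.1 hPmem).2.2.2
    obtain ⟨B, -, hBu⟩ := hcov a (Finset.mem_insert_self a A)
    have e1 : insert a B₁ = B :=
      hBu _ ⟨Finset.mem_insert_self _ _, Finset.mem_insert_self _ _⟩
    have e2 : insert a B₂ = B := by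
      apply hBu
      constructor
      · rw [← hPeq]; exact Finset.mem_insert_self _ _
      · exact Finset.mem_insert_self _ _
    have ha1 : a ∉ B₁ := fun h => ha (h₁.1 h)
    have ha2 : a ∉ B₂ := fun h => ha (h₂.1 h)
    apply hne
    have := e1.trans e2.symm
    calc B₁ = (insert a B₁).erase a := (Finset.erase_insert ha1).symm
    _ = (insert a B₂).erase a := by rw [this]
    _ = B₂ := Finset.erase_insert ha2

lemma assocStirling_zero_zero : assocStirling 0 0 = 1 := by
  classical
  rw [← card_parts_univ]
  rw [show (Finset.univ : Finset (Fin 0)) = ∅ from Finset.univ_eq_empty]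
  rw [parts_empty_zero]
  simp

lemma assocStirling_succ_zero (s : ℕ) : assocStirling (s + 1) 0 = 0 := by
  classical
  rw [← card_parts_univ, parts_zero_of_nonempty Finset.univ_nonempty, Finset.card_empty]

lemma assocStirling_eq_zero {s k : ℕ} (h : s < 2 * k) : assocStirling s k = 0 := by
  classical
  rw [← card_parts_univ, parts_empty_of_pos (by simpa using h), Finset.card_empty]

lemma assocStirling_recurrence (s k : ℕ) :
    assocStirling (s + 1) (k + 1) = ∑ j ∈ range s, s.choose j * assocStirling j k := by
  classical
  have h1 : assocStirling (s + 1) (k + 1) = (parts (Finset.range (s + 1)) (k + 1)).card := by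
    rw [card_parts_eq_assocStirling, Finset.card_range]
  rw [h1, Finset.range_add_one, card_parts_insert (Finset.notMem_range_self) k]
  have h2 : ∀ B' ∈ (Finset.range s).powerset.filter (fun B => B.Nonempty),
      (parts (Finset.range s \ B') k).card = assocStirling (s - B'.card) k := by
    intro B' hB'
    rw [Finset.mem_filter, Finset.mem_powerset] at hB'
    rw [card_parts_eq_assocStirling, Finset.card_sdiff_of_subset hB'.1, Finset.card_range]
  rw [Finset.sum_congr rfl h2, Finset.sum_filter]
  have h3 : ∀ B' ∈ (Finset.range s).powerset,
      (if B'.Nonempty then assocStirling (s - B'.card) k else 0)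
        = (if B'.card = 0 then 0 else assocStirling (s - B'.card) k) := by
    intro B' _
    by_cases h : B'.Nonempty
    · rw [if_pos h, if_neg (Finset.card_ne_zero.2 h)]
    · rw [if_neg h]
      rw [Finset.not_nonempty_iff_eq_empty] at h
      rw [h, Finset.card_empty, if_pos rfl]
  rw [Finset.sum_congr rfl h3]
  have h5 := Finset.sum_powerset_apply_card
    (fun m => if m = 0 then 0 else assocStirling (s - m) k) (x := Finset.range s)
  simp only [Finset.card_range] at h5
  rw [h5, Finset.sum_range_succ']
  simp only [smul_eq_mul]
  norm_num
  have h6 := Finset.sum_range_reflect (fun j => s.choose (s - j) * assocStirling j k) s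
  have h4 : ∀ i ∈ range s,
      s.choose (i + 1) * assocStirling (s - (i + 1)) k
        = s.choose (s - (s - 1 - i)) * assocStirling (s - 1 - i) k := by
    intro i hi
    rw [Finset.mem_range] at hi
    have e1 : s - (s - 1 - i) = i + 1 := by omega
    have e2 : s - (i + 1) = s - 1 - i := by omega
    rw [e1, e2]
  rw [Finset.sum_congr rfl h4, h6]
  refine Finset.sum_congr rfl ?_
  intro j hj
  rw [Finset.mem_range] at hj
  rw [Nat.choose_symm (le_of_lt hj)]

noncomputable def ppmf (n : ℕ) (l : ℝ) : ℝ := l ^ n * Real.exp (-l) / n.factorial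

lemma ppmf_nonneg {n : ℕ} {l : ℝ} (hl : 0 ≤ l) : 0 ≤ ppmf n l := by
  unfold ppmf; positivity

lemma summable_pow_mul {l : ℝ} (hl : 0 ≤ l) (s : ℕ) :
    Summable (fun n : ℕ => (n : ℝ) ^ s * l ^ n / n.factorial) := by
  apply summable_of_ratio_norm_eventually_le (r := 1/2) (by norm_num)
  filter_upwards [eventually_ge_atTop (max 1 ⌈2 ^ (s + 1) * l⌉₊)] with n hn
  have hn1 : 1 ≤ n := le_trans (le_max_left _ _) hn
  have hn2 : 2 ^ (s + 1) * l ≤ (n : ℝ) + 1 := by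
    have h := Nat.ceil_le.1 (le_trans (le_max_right _ _) hn)
    have : ((n : ℝ)) ≤ (n : ℝ) + 1 := by linarith
    linarith
  have hn1' : (1 : ℝ) ≤ (n : ℝ) := by exact_mod_cast hn1
  have hfp : (0 : ℝ) < (n.factorial : ℝ) := by exact_mod_cast n.factorial_pos
  have key : ((n : ℝ) + 1) ^ s * l ≤ 1/2 * (n : ℝ) ^ s * ((n : ℝ) + 1) := by
    have h1 : ((n : ℝ) + 1) ^ s ≤ 2 ^ s * (n : ℝ) ^ s := by
      rw [← mul_pow]
      apply pow_le_pow_left₀ (by linarith) (by linarith)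
    have h2 : ((n : ℝ) + 1) ^ s * l ≤ 2 ^ s * (n : ℝ) ^ s * l :=
      mul_le_mul_of_nonneg_right h1 hl
    have h3 : (0 : ℝ) ≤ (n : ℝ) ^ s := by positivity
    have h4 := mul_le_mul_of_nonneg_left hn2 h3
    rw [pow_succ] at h4
    nlinarith
  have hnorm : ∀ m : ℕ, ‖(m : ℝ) ^ s * l ^ m / m.factorial‖
      = (m : ℝ) ^ s * l ^ m / m.factorial := by
    intro m; apply Real.norm_of_nonneg; positivity
  rw [hnorm, hnorm]
  have hfac : ((n + 1).factorial : ℝ) = ((n : ℝ) + 1) * n.factorial := by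
    rw [Nat.factorial_succ]; push_cast; ring
  push_cast
  rw [hfac, pow_succ l n]
  have hr : 1/2 * ((n : ℝ) ^ s * l ^ n / n.factorial)
      = (1/2 * ((n : ℝ) ^ s * l ^ n)) / n.factorial := by ring
  rw [hr, div_le_div_iff₀ (by positivity) hfp]
  have hln : (0 : ℝ) ≤ l ^ n := by positivity
  nlinarith [mul_le_mul_of_nonneg_right key (mul_nonneg hln hfp.le)]

lemma two_pow_add_bound {a b : ℝ} (ha : 0 ≤ a) (hb : 0 ≤ b) (s : ℕ) :
    (a + b) ^ s ≤ 2 ^ s * (a ^ s + b ^ s) := by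
  have h1 : a + b ≤ 2 * max a b := by
    rcases le_total a b with h | h
    · rw [max_eq_right h]; linarith
    · rw [max_eq_left h]; linarith
  calc (a + b) ^ s ≤ (2 * max a b) ^ s :=
        pow_le_pow_left₀ (by linarith) h1 s
  _ = 2 ^ s * (max a b) ^ s := mul_pow 2 _ s
  _ ≤ 2 ^ s * (a ^ s + b ^ s) := by
      apply mul_le_mul_of_nonneg_left _ (by positivity)
      rcases le_total a b with h | h
      · rw [max_eq_right h]; nlinarith [pow_nonneg ha s]
      · rw [max_eq_left h]; nlinarith [pow_nonneg hb s]

lemma summable_centered {l : ℝ} (hl : 0 ≤ l) (s t : ℕ) :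
    Summable (fun n : ℕ => |(n : ℝ) - l| ^ s * (n : ℝ) ^ t * ppmf n l) := by
  have hexp : Real.exp (-l) ≤ 1 := Real.exp_le_one_iff.2 (by linarith)
  apply Summable.of_nonneg_of_le
    (f := fun n : ℕ => 2 ^ s * ((n : ℝ) ^ (s + t) * l ^ n / n.factorial)
      + (2 ^ s * l ^ s) * ((n : ℝ) ^ t * l ^ n / n.factorial))
  · intro n; have := ppmf_nonneg (n := n) hl; positivity
  · intro n
    have h1 : |(n : ℝ) - l| ≤ (n : ℝ) + l := by
      have := abs_sub (n : ℝ) l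
      calc |(n : ℝ) - l| ≤ |(n : ℝ)| + |l| := abs_sub _ _
      _ = (n : ℝ) + l := by rw [abs_of_nonneg (Nat.cast_nonneg n), abs_of_nonneg hl]
    have h2 : |(n : ℝ) - l| ^ s ≤ 2 ^ s * ((n : ℝ) ^ s + l ^ s) := by
      calc |(n : ℝ) - l| ^ s ≤ ((n : ℝ) + l) ^ s :=
            pow_le_pow_left₀ (abs_nonneg _) h1 s
      _ ≤ 2 ^ s * ((n : ℝ) ^ s + l ^ s) :=
            two_pow_add_bound (Nat.cast_nonneg n) hl s
    have hpp : ppmf n l ≤ l ^ n / n.factorial := by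
      unfold ppmf
      have hfp : (0 : ℝ) < (n.factorial : ℝ) := by exact_mod_cast n.factorial_pos
      rw [div_le_div_iff₀ hfp hfp]
      have hln : (0 : ℝ) ≤ l ^ n := by positivity
      have h5 : l ^ n * Real.exp (-l) ≤ l ^ n * 1 :=
        mul_le_mul_of_nonneg_left hexp hln
      nlinarith
    have hppn := ppmf_nonneg (n := n) hl
    calc |(n : ℝ) - l| ^ s * (n : ℝ) ^ t * ppmf n l
        ≤ (2 ^ s * ((n : ℝ) ^ s + l ^ s)) * (n : ℝ) ^ t * (l ^ n / n.factorial) := by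
          apply mul_le_mul (mul_le_mul_of_nonneg_right h2 (by positivity)) hpp hppn
          positivity
    _ = 2 ^ s * ((n : ℝ) ^ (s + t) * l ^ n / n.factorial)
          + (2 ^ s * l ^ s) * ((n : ℝ) ^ t * l ^ n / n.factorial) := by
          rw [pow_add]; ring
  · exact ((summable_pow_mul hl (s + t)).mul_left _).add
      ((summable_pow_mul hl t).mul_left _)

lemma summable_cm {l : ℝ} (hl : 0 ≤ l) (s : ℕ) :
    Summable (fun n : ℕ => ((n : ℝ) - l) ^ s * ppmf n l) := by
  apply Summable.of_norm
  have h := summable_centered hl s 0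
  simp only [pow_zero, mul_one] at h
  apply h.congr
  intro n
  rw [Real.norm_eq_abs, abs_mul, abs_pow, abs_of_nonneg (ppmf_nonneg hl)]

lemma summable_cm_mul {l : ℝ} (hl : 0 ≤ l) (s : ℕ) :
    Summable (fun n : ℕ => ((n : ℝ) - l) ^ s * (n : ℝ) * ppmf n l) := by
  apply Summable.of_norm
  have h := summable_centered hl s 1
  simp only [pow_one] at h
  apply h.congr
  intro n
  rw [Real.norm_eq_abs, abs_mul, abs_mul, abs_pow, abs_of_nonneg (ppmf_nonneg hl),
    Nat.abs_cast]

noncomputable def pCM (s : ℕ) (l : ℝ) : ℝ := ∑' n : ℕ, ((n : ℝ) - l) ^ s * ppmf n l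

lemma pCM_zero (l : ℝ) : pCM 0 l = 1 := by
  unfold pCM
  simp only [pow_zero, one_mul]
  have h : ∀ n : ℕ, ppmf n l = Real.exp (-l) * (l ^ n / n.factorial) := by
    intro n; unfold ppmf; ring
  rw [tsum_congr h, tsum_mul_left]
  have hexp : ∑' n : ℕ, l ^ n / n.factorial = Real.exp l := by
    rw [Real.exp_eq_exp_ℝ, NormedSpace.exp_eq_tsum_div]
  rw [hexp, ← Real.exp_add]
  simp

lemma pCM_succ (s : ℕ) {l : ℝ} (hl : 0 ≤ l) :
    pCM (s + 1) l = l * ∑ j ∈ range s, (s.choose j : ℝ) * pCM j l := by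
  have hstep1 : pCM (s + 1) l
      = (∑' n : ℕ, ((n : ℝ) - l) ^ s * (n : ℝ) * ppmf n l) - l * pCM s l := by
    unfold pCM
    rw [← tsum_mul_left, ← Summable.tsum_sub (summable_cm_mul hl s)
      ((summable_cm hl s).mul_left l)]
    apply tsum_congr
    intro n
    ring
  have hkey : ∀ n : ℕ, ((n : ℝ) + 1) * ppmf (n + 1) l = l * ppmf n l := by
    intro n
    unfold ppmf
    rw [Nat.factorial_succ, pow_succ]
    push_cast
    have hfp : ((n.factorial : ℝ)) ≠ 0 := by
      exact_mod_cast n.factorial_ne_zero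
    field_simp
  have hstep2 : (∑' n : ℕ, ((n : ℝ) - l) ^ s * (n : ℝ) * ppmf n l)
      = l * ∑' n : ℕ, (((n : ℝ) - l) + 1) ^ s * ppmf n l := by
    rw [Summable.tsum_eq_zero_add (summable_cm_mul hl s)]
    simp only [Nat.cast_zero, mul_zero, zero_mul, zero_add]
    rw [← tsum_mul_left]
    apply tsum_congr
    intro n
    push_cast
    calc ((n : ℝ) + 1 - l) ^ s * ((n : ℝ) + 1) * ppmf (n + 1) l
        = ((n : ℝ) + 1 - l) ^ s * (((n : ℝ) + 1) * ppmf (n + 1) l) := by ring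
    _ = ((n : ℝ) + 1 - l) ^ s * (l * ppmf n l) := by rw [hkey n]
    _ = l * ((((n : ℝ) - l) + 1) ^ s * ppmf n l) := by ring_nf
  have hstep3 : (∑' n : ℕ, (((n : ℝ) - l) + 1) ^ s * ppmf n l)
      = ∑ j ∈ range (s + 1), (s.choose j : ℝ) * pCM j l := by
    have hexp : ∀ n : ℕ, (((n : ℝ) - l) + 1) ^ s * ppmf n l
        = ∑ j ∈ range (s + 1), (s.choose j : ℝ) * (((n : ℝ) - l) ^ j * ppmf n l) := by
      intro n
      rw [add_pow]
      rw [Finset.sum_mul]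
      apply Finset.sum_congr rfl
      intro j _
      rw [one_pow]
      ring
    rw [tsum_congr hexp]
    rw [Summable.tsum_finsetSum (fun j _ => (summable_cm hl j).mul_left _)]
    apply Finset.sum_congr rfl
    intro j _
    rw [tsum_mul_left]
    rfl
  rw [hstep1, hstep2, hstep3, Finset.sum_range_succ, Nat.choose_self]
  push_cast
  ring

noncomputable def pT (s : ℕ) (l : ℝ) : ℝ :=
  ∑ k ∈ range (s + 1), (assocStirling s k : ℝ) * l ^ k

lemma pT_zero (l : ℝ) : pT 0 l = 1 := by
  unfold pT
  simp [assocStirling_zero_zero]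

lemma pT_succ (s : ℕ) (l : ℝ) :
    pT (s + 1) l = l * ∑ j ∈ range s, (s.choose j : ℝ) * pT j l := by
  unfold pT
  rw [Finset.sum_range_succ']
  rw [assocStirling_succ_zero]
  simp only [Nat.cast_zero, zero_mul, add_zero, pow_zero, mul_one]
  have h1 : ∀ k ∈ range (s + 1),
      (assocStirling (s + 1) (k + 1) : ℝ) * l ^ (k + 1)
        = ∑ j ∈ range s, (s.choose j : ℝ) * ((assocStirling j k : ℝ) * l ^ (k + 1)) := by
    intro k _
    rw [assocStirling_recurrence]
    push_cast
    rw [Finset.sum_mul]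
    apply Finset.sum_congr rfl
    intro i _
    ring
  rw [Finset.sum_congr rfl h1, Finset.sum_comm]
  rw [Finset.mul_sum]
  apply Finset.sum_congr rfl
  intro j hj
  rw [Finset.mem_range] at hj
  have h2 : ∑ k ∈ range (j + 1), (assocStirling j k : ℝ) * l ^ k
      = ∑ k ∈ range (s + 1), (assocStirling j k : ℝ) * l ^ k := by
    apply Finset.sum_subset
    · apply Finset.range_subset_range.2; omega
    · intro k _ hk
      rw [Finset.mem_range, not_lt] at hk
      rw [assocStirling_eq_zero (by omega), Nat.cast_zero, zero_mul]
  rw [h2, Finset.mul_sum, Finset.mul_sum]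
  apply Finset.sum_congr rfl
  intro k _
  rw [pow_succ']
  ring

lemma pCM_eq_pT (s : ℕ) {l : ℝ} (hl : 0 ≤ l) : pCM s l = pT s l := by
  induction s using Nat.strong_induction_on with
  | _ s ih =>
    match s with
    | 0 => rw [pCM_zero, pT_zero]
    | (s + 1) =>
      rw [pCM_succ s hl, pT_succ s]
      congr 1
      apply Finset.sum_congr rfl
      intro j hj
      rw [Finset.mem_range] at hj
      rw [ih j (by omega)]

section Transfer

variable {Ω : Type*} [MeasurableSpace Ω] {μ : Measure Ω}
  {X : Ω → ℝ} {Y : Ω → ℕ} {ρ : ℝ}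

lemma ppmf_measurable (ℓ : ℕ) : Measurable (fun x : ℝ => ppmf ℓ (ρ * x)) := by
  unfold ppmf
  fun_prop

lemma cond_map_eq (hX : Measurable X) (hY : Measurable Y)
    (hcond : CondPoisson μ X Y ρ) (ℓ : ℕ) :
    (μ.restrict {ω | Y ω = ℓ}).map X
      = (μ.map X).withDensity (fun x => ENNReal.ofReal (ppmf ℓ (ρ * x))) := by
  apply Measure.ext
  intro A hA
  rw [Measure.map_apply hX hA,
    Measure.restrict_apply (hX hA)]
  have h1 : X ⁻¹' A ∩ {ω | Y ω = ℓ} = {ω | X ω ∈ A ∧ Y ω = ℓ} := rfl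
  rw [h1, hcond ℓ A hA]
  rw [withDensity_apply _ hA, setLIntegral_map hA ((ppmf_measurable ℓ).ennreal_ofReal) hX]
  rfl

lemma cond_lintegral (hX : Measurable X) (hY : Measurable Y)
    (hcond : CondPoisson μ X Y ρ) (ℓ : ℕ) {g : ℝ → ℝ≥0∞} (hg : Measurable g) :
    ∫⁻ ω in {ω | Y ω = ℓ}, g (X ω) ∂μ
      = ∫⁻ ω, g (X ω) * ENNReal.ofReal (ppmf ℓ (ρ * X ω)) ∂μ := by
  have h1 : ∫⁻ ω in {ω | Y ω = ℓ}, g (X ω) ∂μ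
      = ∫⁻ x, g x ∂((μ.restrict {ω | Y ω = ℓ}).map X) := (lintegral_map hg hX).symm
  rw [h1, cond_map_eq hX hY hcond ℓ,
    lintegral_withDensity_eq_lintegral_mul _ ((ppmf_measurable ℓ).ennreal_ofReal) hg]
  simp only [Pi.mul_apply]
  rw [lintegral_map (f := fun a => ENNReal.ofReal (ppmf ℓ (ρ * a)) * g a) (((ppmf_measurable ℓ).ennreal_ofReal).mul hg) hX]
  apply lintegral_congr
  intro ω
  simp [mul_comm]

lemma cond_integral (hX : Measurable X) (hY : Measurable Y)
    (hcond : CondPoisson μ X Y ρ) (hρ : 0 ≤ ρ) (hXnn : ∀ ω, 0 ≤ X ω) (ℓ : ℕ)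
    {g : ℝ → ℝ} (hg : Measurable g) :
    ∫ ω in {ω | Y ω = ℓ}, g (X ω) ∂μ
      = ∫ ω, ppmf ℓ (ρ * X ω) * g (X ω) ∂μ := by
  have h1 : ∫ ω in {ω | Y ω = ℓ}, g (X ω) ∂μ
      = ∫ x, g x ∂((μ.restrict {ω | Y ω = ℓ}).map X) :=
    (integral_map hX.aemeasurable hg.aestronglyMeasurable).symm
  have hdm : Measurable (fun x : ℝ => (ppmf ℓ (ρ * x)).toNNReal) :=
    measurable_real_toNNReal.comp (ppmf_measurable ℓ)
  have h2 : (fun x : ℝ => ENNReal.ofReal (ppmf ℓ (ρ * x)))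
      = fun x : ℝ => ((ppmf ℓ (ρ * x)).toNNReal : ℝ≥0∞) := rfl
  rw [h1, cond_map_eq hX hY hcond ℓ, h2,
    integral_withDensity_eq_integral_smul hdm,
    integral_map hX.aemeasurable]
  · apply integral_congr_ae
    filter_upwards with ω
    have hnn : 0 ≤ ppmf ℓ (ρ * X ω) := ppmf_nonneg (mul_nonneg hρ (hXnn ω))
    simp [NNReal.smul_def, Real.coe_toNNReal _ hnn]
  · apply Measurable.aestronglyMeasurable
    exact (hdm.subtype_coe.smul hg : Measurable fun x => (ppmf ℓ (ρ * x)).toNNReal • g x)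

end Transfer

section Core

variable {Ω : Type*} [MeasurableSpace Ω] {μ : Measure Ω}
  {X : Ω → ℝ} {Y : Ω → ℕ} {ρ : ℝ}

lemma lintegral_ofReal_pT_lt_top [IsProbabilityMeasure μ]
    (hX : Measurable X) (hXnn : ∀ ω, 0 ≤ X ω) (hρ : 0 ≤ ρ)
    (hmom : ∀ k : ℕ, Integrable (fun ω => X ω ^ k) μ) (m : ℕ) :
    ∫⁻ ω, ENNReal.ofReal (pT m (ρ * X ω)) ∂μ < ⊤ := by
  have hle : ∀ ω, ENNReal.ofReal (pT m (ρ * X ω))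
      ≤ ∑ k ∈ range (m + 1),
          ENNReal.ofReal ((assocStirling m k : ℝ) * ρ ^ k)
            * ENNReal.ofReal (X ω ^ k) := by
    intro ω
    unfold pT
    rw [ENNReal.ofReal_sum_of_nonneg (fun k _ => by
      have := hXnn ω
      positivity)]
    apply Finset.sum_le_sum
    intro k _
    rw [mul_pow, ← ENNReal.ofReal_mul (by positivity)]
    apply ENNReal.ofReal_le_ofReal
    ring_nf
    exact le_refl _
  apply lt_of_le_of_lt (lintegral_mono hle)
  rw [lintegral_finset_sum _ (fun k _ => by
    apply Measurable.const_mul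
    exact ((hX.pow_const k).ennreal_ofReal))]
  apply ENNReal.sum_lt_top.2
  intro k _
  rw [lintegral_const_mul _ ((hX.pow_const k).ennreal_ofReal)]
  apply ENNReal.mul_lt_top ENNReal.ofReal_lt_top
  have heq : ∀ ω, ENNReal.ofReal (X ω ^ k) = (‖X ω ^ k‖₊ : ℝ≥0∞) := by
    intro ω
    rw [← enorm_eq_nnnorm, Real.enorm_eq_ofReal (by have := hXnn ω; positivity)]
  calc ∫⁻ ω, ENNReal.ofReal (X ω ^ k) ∂μ
      = ∫⁻ ω, (‖X ω ^ k‖₊ : ℝ≥0∞) ∂μ := lintegral_congr heq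
  _ < ⊤ := (hmom k).hasFiniteIntegral

end Core

lemma abs_pow_le_one_add {t : ℝ} (s : ℕ) : |t| ^ s ≤ 1 + t ^ (2 * s) := by
  have habs : |t| ^ (2 * s) = t ^ (2 * s) := by
    rw [← abs_pow, abs_of_nonneg (by rw [pow_mul]; positivity)]
  rcases le_total |t| 1 with h | h
  · have h1 : |t| ^ s ≤ 1 := pow_le_one₀ (abs_nonneg t) h
    have h2 : (0:ℝ) ≤ t ^ (2 * s) := by rw [pow_mul]; positivity
    linarith
  · have h1 : |t| ^ s ≤ |t| ^ (2 * s) := pow_le_pow_right₀ h (by omega)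
    rw [habs] at h1
    linarith

lemma tsum_abs_ppmf_le {l : ℝ} (hl : 0 ≤ l) (s : ℕ) :
    ∑' n : ℕ, |(n : ℝ) - l| ^ s * ppmf n l ≤ 1 + pT (2 * s) l := by
  have hP0 : Summable (fun n : ℕ => ppmf n l) := by
    have := summable_cm hl 0
    simpa using this
  have hP2 : Summable (fun n : ℕ => ((n : ℝ) - l) ^ (2 * s) * ppmf n l) :=
    summable_cm hl (2 * s)
  have hle : ∀ n : ℕ, |(n : ℝ) - l| ^ s * ppmf n l
      ≤ ppmf n l + ((n : ℝ) - l) ^ (2 * s) * ppmf n l := by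
    intro n
    have h1 := abs_pow_le_one_add (t := (n : ℝ) - l) s
    have h2 := ppmf_nonneg (n := n) hl
    nlinarith
  calc ∑' n : ℕ, |(n : ℝ) - l| ^ s * ppmf n l
      ≤ ∑' n : ℕ, (ppmf n l + ((n : ℝ) - l) ^ (2 * s) * ppmf n l) := by
        apply Summable.tsum_le_tsum hle _ (hP0.add hP2)
        have := summable_centered hl s 0
        simpa using this
  _ = (∑' n : ℕ, ppmf n l) + ∑' n : ℕ, ((n : ℝ) - l) ^ (2 * s) * ppmf n l :=
        Summable.tsum_add hP0 hP2
  _ = 1 + pT (2 * s) l := by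
        have h1 : (∑' n : ℕ, ppmf n l) = pCM 0 l := by
          unfold pCM; apply tsum_congr; intro n; simp
        rw [h1, pCM_zero, ← pCM_eq_pT (2 * s) hl]
        rfl

theorem condPoisson_centered_moments
    {Ω : Type*} [MeasurableSpace Ω] (μ : Measure Ω) [IsProbabilityMeasure μ]
    (X : Ω → ℝ) (Y : Ω → ℕ) (ρ : ℝ) (hρ : 0 < ρ)
    (hX : Measurable X) (hY : Measurable Y) (hXnn : ∀ ω, 0 ≤ X ω)
    (hmom : ∀ s : ℕ, Integrable (fun ω => X ω ^ s) μ)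
    (hcond : CondPoisson μ X Y ρ) (s : ℕ) :
    ∫ ω, ((Y ω : ℝ) - ρ * X ω) ^ s ∂μ
      = ∑ k ∈ Finset.range (s + 1),
          ρ ^ k * (∫ ω, X ω ^ k ∂μ) * (assocStirling s k : ℝ) := by
  have hρ' : 0 ≤ ρ := hρ.le
  have hlnn : ∀ ω, 0 ≤ ρ * X ω := fun ω => mul_nonneg hρ' (hXnn ω)
  -- the partition by values of Y
  have hSm : ∀ ℓ : ℕ, MeasurableSet {ω | Y ω = ℓ} :=
    fun ℓ => hY (measurableSet_singleton ℓ)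
  have hSd : Pairwise (Function.onFun Disjoint (fun ℓ : ℕ => {ω | Y ω = ℓ})) := by
    intro i j hij
    simp only [Function.onFun]
    rw [Set.disjoint_left]
    rintro ω h1 h2
    exact hij ((h1 : Y ω = i).symm.trans (h2 : Y ω = j))
  have hSu : (⋃ ℓ : ℕ, {ω | Y ω = ℓ}) = Set.univ := by
    ext ω; simp
  have hYc : Measurable (fun ω => (Y ω : ℝ)) := (measurable_from_top (f := (Nat.cast : ℕ → ℝ))).comp hY
  have hFm : Measurable (fun ω => ((Y ω : ℝ) - ρ * X ω) ^ s) :=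
    (hYc.sub (hX.const_mul ρ)).pow_const s
  have hppX : ∀ ℓ : ℕ, Measurable (fun ω => ppmf ℓ (ρ * X ω)) :=
    fun ℓ => (ppmf_measurable ℓ).comp hX
  have hev : ∀ (m : ℕ) (x : ℝ), (0:ℝ) ≤ x ^ (2 * m) := by
    intro m x; rw [pow_mul]; positivity
  -- key lintegral computation
  have key_lint : ∀ m : ℕ,
      ∫⁻ ω, ENNReal.ofReal (((Y ω : ℝ) - ρ * X ω) ^ (2 * m)) ∂μ
        = ∫⁻ ω, ENNReal.ofReal (pCM (2 * m) (ρ * X ω)) ∂μ := by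
    intro m
    have hglm : ∀ ℓ : ℕ, Measurable (fun x : ℝ => ENNReal.ofReal (((ℓ : ℝ) - ρ * x) ^ (2 * m))) :=
      fun ℓ => (((measurable_const.sub (measurable_id.const_mul ρ)).pow_const (2 * m))).ennreal_ofReal
    calc ∫⁻ ω, ENNReal.ofReal (((Y ω : ℝ) - ρ * X ω) ^ (2 * m)) ∂μ
        = ∫⁻ ω in Set.univ, ENNReal.ofReal (((Y ω : ℝ) - ρ * X ω) ^ (2 * m)) ∂μ :=
          (setLIntegral_univ _).symm
    _ = ∫⁻ ω in ⋃ ℓ : ℕ, {ω | Y ω = ℓ}, ENNReal.ofReal (((Y ω : ℝ) - ρ * X ω) ^ (2 * m)) ∂μ := by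
          rw [hSu]
    _ = ∑' ℓ : ℕ, ∫⁻ ω in {ω | Y ω = ℓ}, ENNReal.ofReal (((Y ω : ℝ) - ρ * X ω) ^ (2 * m)) ∂μ :=
          lintegral_iUnion hSm hSd _
    _ = ∑' ℓ : ℕ, ∫⁻ ω, ENNReal.ofReal (((ℓ : ℝ) - ρ * X ω) ^ (2 * m))
            * ENNReal.ofReal (ppmf ℓ (ρ * X ω)) ∂μ := by
          apply tsum_congr
          intro ℓ
          rw [setLIntegral_congr_fun (hSm ℓ)
            (fun ω (hω : Y ω = ℓ) => by rw [hω])]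
          exact cond_lintegral hX hY hcond ℓ (hglm ℓ)
    _ = ∫⁻ ω, ∑' ℓ : ℕ, ENNReal.ofReal (((ℓ : ℝ) - ρ * X ω) ^ (2 * m))
            * ENNReal.ofReal (ppmf ℓ (ρ * X ω)) ∂μ := by
          have hintm : ∀ ℓ : ℕ, Measurable fun ω =>
              ENNReal.ofReal (((ℓ : ℝ) - ρ * X ω) ^ (2 * m))
                * ENNReal.ofReal (ppmf ℓ (ρ * X ω)) := fun ℓ =>
            (((measurable_const.sub (hX.const_mul ρ)).pow_const (2 * m)).ennreal_ofReal).mul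
              ((hppX ℓ).ennreal_ofReal)
          rw [lintegral_tsum (fun ℓ => (hintm ℓ).aemeasurable)]
    _ = ∫⁻ ω, ENNReal.ofReal (pCM (2 * m) (ρ * X ω)) ∂μ := by
          apply lintegral_congr
          intro ω
          rw [pCM, ENNReal.ofReal_tsum_of_nonneg
            (fun ℓ => mul_nonneg (hev m _) (ppmf_nonneg (hlnn ω)))
            (summable_cm (hlnn ω) (2 * m))]
          apply tsum_congr
          intro ℓ
          rw [ENNReal.ofReal_mul (hev m _)]
  have key_fin : ∀ m : ℕ,
      ∫⁻ ω, ENNReal.ofReal (pCM (2 * m) (ρ * X ω)) ∂μ < ⊤ := by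
    intro m
    have : ∀ ω, ENNReal.ofReal (pCM (2 * m) (ρ * X ω))
        = ENNReal.ofReal (pT (2 * m) (ρ * X ω)) := by
      intro ω; rw [pCM_eq_pT _ (hlnn ω)]
    rw [lintegral_congr this]
    exact lintegral_ofReal_pT_lt_top hX hXnn hρ' hmom (2 * m)
  -- integrability of the centered power
  have hFi : Integrable (fun ω => ((Y ω : ℝ) - ρ * X ω) ^ s) μ := by
    refine ⟨hFm.aestronglyMeasurable, ?_⟩
    show ∫⁻ ω, (‖((Y ω : ℝ) - ρ * X ω) ^ s‖₊ : ℝ≥0∞) ∂μ < ⊤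
    have hb : ∀ ω, (‖((Y ω : ℝ) - ρ * X ω) ^ s‖₊ : ℝ≥0∞)
        ≤ 1 + ENNReal.ofReal (((Y ω : ℝ) - ρ * X ω) ^ (2 * s)) := by
      intro ω
      rw [← enorm_eq_nnnorm, Real.enorm_eq_ofReal_abs, abs_pow]
      calc ENNReal.ofReal (|(Y ω : ℝ) - ρ * X ω| ^ s)
          ≤ ENNReal.ofReal (1 + ((Y ω : ℝ) - ρ * X ω) ^ (2 * s)) :=
            ENNReal.ofReal_le_ofReal (abs_pow_le_one_add s)
      _ ≤ 1 + ENNReal.ofReal (((Y ω : ℝ) - ρ * X ω) ^ (2 * s)) := by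
            rw [ENNReal.ofReal_add (by norm_num) (hev s _), ENNReal.ofReal_one]
    calc ∫⁻ ω, (‖((Y ω : ℝ) - ρ * X ω) ^ s‖₊ : ℝ≥0∞) ∂μ
        ≤ ∫⁻ ω, (1 + ENNReal.ofReal (((Y ω : ℝ) - ρ * X ω) ^ (2 * s))) ∂μ :=
          lintegral_mono hb
    _ = ∫⁻ _, (1 : ℝ≥0∞) ∂μ + ∫⁻ ω, ENNReal.ofReal (((Y ω : ℝ) - ρ * X ω) ^ (2 * s)) ∂μ :=
          lintegral_add_left measurable_const _
    _ < ⊤ := by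
          rw [lintegral_const, key_lint s]
          have h1 := key_fin s
          have h2 : (1 : ℝ≥0∞) * μ Set.univ < ⊤ := by
            simp [measure_univ]
          exact ENNReal.add_lt_top.2 ⟨h2, h1⟩
  -- now the value
  have hgm : ∀ ℓ : ℕ, Measurable (fun x : ℝ => ((ℓ : ℝ) - ρ * x) ^ s) :=
    fun ℓ => (measurable_const.sub (measurable_id.const_mul ρ)).pow_const s
  have hprodm : ∀ ℓ : ℕ, Measurable (fun ω => ppmf ℓ (ρ * X ω) * ((ℓ : ℝ) - ρ * X ω) ^ s) :=
    fun ℓ => (hppX ℓ).mul ((hgm ℓ).comp hX)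
  have hsum_fin : (∑' ℓ : ℕ, ∫⁻ ω, (‖ppmf ℓ (ρ * X ω) * ((ℓ : ℝ) - ρ * X ω) ^ s‖₊ : ℝ≥0∞) ∂μ) ≠ ⊤ := by
    apply ne_of_lt
    have heq : ∀ ℓ : ℕ, ∀ ω, (‖ppmf ℓ (ρ * X ω) * ((ℓ : ℝ) - ρ * X ω) ^ s‖₊ : ℝ≥0∞)
        = ENNReal.ofReal (|(ℓ : ℝ) - ρ * X ω| ^ s * ppmf ℓ (ρ * X ω)) := by
      intro ℓ ω
      rw [← enorm_eq_nnnorm, Real.enorm_eq_ofReal_abs, abs_mul, abs_pow,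
        abs_of_nonneg (ppmf_nonneg (hlnn ω)), mul_comm]
    have hmeas : ∀ ℓ : ℕ, AEMeasurable
        (fun ω => ENNReal.ofReal (|(ℓ : ℝ) - ρ * X ω| ^ s * ppmf ℓ (ρ * X ω))) μ := by
      intro ℓ
      apply Measurable.aemeasurable
      apply Measurable.ennreal_ofReal
      exact ((((measurable_const.sub (measurable_id.const_mul ρ)).abs.pow_const s).comp hX).mul
        (hppX ℓ))
    calc ∑' ℓ : ℕ, ∫⁻ ω, (‖ppmf ℓ (ρ * X ω) * ((ℓ : ℝ) - ρ * X ω) ^ s‖₊ : ℝ≥0∞) ∂μ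
        = ∑' ℓ : ℕ, ∫⁻ ω, ENNReal.ofReal (|(ℓ : ℝ) - ρ * X ω| ^ s * ppmf ℓ (ρ * X ω)) ∂μ := by
          apply tsum_congr; intro ℓ; apply lintegral_congr; intro ω; rw [heq ℓ ω]
    _ = ∫⁻ ω, ∑' ℓ : ℕ, ENNReal.ofReal (|(ℓ : ℝ) - ρ * X ω| ^ s * ppmf ℓ (ρ * X ω)) ∂μ :=
          (lintegral_tsum hmeas).symm
    _ ≤ ∫⁻ ω, ENNReal.ofReal (1 + pT (2 * s) (ρ * X ω)) ∂μ := by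
          apply lintegral_mono
          intro ω
          dsimp only
          rw [← ENNReal.ofReal_tsum_of_nonneg
            (fun ℓ => mul_nonneg (by positivity) (ppmf_nonneg (hlnn ω)))]
          · exact ENNReal.ofReal_le_ofReal (tsum_abs_ppmf_le (hlnn ω) s)
          · have := summable_centered (hlnn ω) s 0
            simpa using this
    _ ≤ ∫⁻ ω, (1 + ENNReal.ofReal (pT (2 * s) (ρ * X ω))) ∂μ := by
          apply lintegral_mono
          intro ω
          calc ENNReal.ofReal (1 + pT (2 * s) (ρ * X ω))
              ≤ ENNReal.ofReal 1 + ENNReal.ofReal (pT (2 * s) (ρ * X ω)) :=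
                ENNReal.ofReal_add_le
          _ = 1 + ENNReal.ofReal (pT (2 * s) (ρ * X ω)) := by rw [ENNReal.ofReal_one]
    _ < ⊤ := by
          rw [lintegral_add_left measurable_const, lintegral_const]
          refine ENNReal.add_lt_top.2 ⟨by simp [measure_univ], ?_⟩
          exact lintegral_ofReal_pT_lt_top hX hXnn hρ' hmom (2 * s)
  calc ∫ ω, ((Y ω : ℝ) - ρ * X ω) ^ s ∂μ
      = ∫ ω in Set.univ, ((Y ω : ℝ) - ρ * X ω) ^ s ∂μ := (setIntegral_univ).symm
  _ = ∫ ω in ⋃ ℓ : ℕ, {ω | Y ω = ℓ}, ((Y ω : ℝ) - ρ * X ω) ^ s ∂μ := by rw [hSu]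
  _ = ∑' ℓ : ℕ, ∫ ω in {ω | Y ω = ℓ}, ((Y ω : ℝ) - ρ * X ω) ^ s ∂μ :=
        integral_iUnion hSm hSd (hSu ▸ hFi.integrableOn)
  _ = ∑' ℓ : ℕ, ∫ ω, ppmf ℓ (ρ * X ω) * ((ℓ : ℝ) - ρ * X ω) ^ s ∂μ := by
        apply tsum_congr
        intro ℓ
        rw [setIntegral_congr_fun (hSm ℓ) (fun ω (hω : Y ω = ℓ) => by rw [hω])]
        exact cond_integral hX hY hcond hρ' hXnn ℓ (hgm ℓ)
  _ = ∫ ω, ∑' ℓ : ℕ, ppmf ℓ (ρ * X ω) * ((ℓ : ℝ) - ρ * X ω) ^ s ∂μ :=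
        (integral_tsum (fun ℓ => (hprodm ℓ).aestronglyMeasurable) hsum_fin).symm
  _ = ∫ ω, pT s (ρ * X ω) ∂μ := by
        apply integral_congr_ae
        filter_upwards with ω
        rw [← pCM_eq_pT s (hlnn ω), pCM]
        apply tsum_congr
        intro ℓ
        ring
  _ = ∑ k ∈ Finset.range (s + 1), ρ ^ k * (∫ ω, X ω ^ k ∂μ) * (assocStirling s k : ℝ) := by
        unfold pT
        have hexp : ∀ ω, ∑ k ∈ range (s + 1), (assocStirling s k : ℝ) * (ρ * X ω) ^ k
            = ∑ k ∈ range (s + 1), ((assocStirling s k : ℝ) * ρ ^ k) * X ω ^ k := by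
          intro ω
          apply Finset.sum_congr rfl
          intro k _
          rw [mul_pow]; ring
        rw [integral_congr_ae (Filter.Eventually.of_forall hexp)]
        rw [integral_finset_sum _ (fun k _ => (hmom k).const_mul _)]
        apply Finset.sum_congr rfl
        intro k _
        rw [integral_const_mul]
        ring
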